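/- Let p ≥ 1, and for i = 1,…,p let Aᵢ ∈ ℝ^{m×n_i} and βᵢ > 0, and let δ > 0. Then for every p-tuple (x₁,…,x_p) with xᵢ ∈ ℝ^{n_i} and every λ ∈ ℝᵐ, Σ_{i=1}^p βᵢ‖xᵢ‖² − 2λᵀ(Σ_{i=1}^p Aᵢxᵢ) + λᵀ(Σ_{i=1}^p (1/βᵢ)AᵢAᵢᵀ + δIₘ)λ = Σ_{i=1}^p ‖(1/√βᵢ)Aᵢᵀλ − √βᵢ xᵢ‖² + δ‖λ‖²; in particular this quantity is strictly positive whenever (x₁,…,x_p,λ) ≠ 0, i.e. the block matrix H with diagonal blocks β₁I_{n₁},…,β_pI_{n_p}, M_p = Σ_{i=1}^p (1/βᵢ)AᵢAᵢᵀ + δIₘ and off-diagonal blocks −Aᵢᵀ (and −Aᵢ) is positive definite. -/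

import Mathlib

open Matrix Set

lemma dp_self_nonneg {k : ℕ} (v : Fin k → ℝ) : (0:ℝ) ≤ v ⬝ᵥ v :=
  Finset.sum_nonneg fun i _ => mul_self_nonneg (v i)

lemma dp_self_pos {k : ℕ} {v : Fin k → ℝ} (hv : v ≠ 0) : (0:ℝ) < v ⬝ᵥ v :=
  ((dp_self_nonneg v).lt_or_eq).elim id fun h =>
    absurd (dotProduct_self_eq_zero.mp h.symm) hv

lemma my_sum_mulVec {k l q : ℕ} (M : Fin q → Matrix (Fin k) (Fin l) ℝ) (v : Fin l → ℝ) :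
    (∑ i, M i) *ᵥ v = ∑ i, M i *ᵥ v := by
  ext j
  simp [Matrix.mulVec, dotProduct, Matrix.sum_apply, Finset.sum_mul]
  rw [Finset.sum_comm]

lemma my_dotProduct_sum {k q : ℕ} (v : Fin k → ℝ) (w : Fin q → (Fin k → ℝ)) :
    v ⬝ᵥ (∑ i, w i) = ∑ i, v ⬝ᵥ w i := by
  simp [dotProduct, Finset.mul_sum, Finset.sum_apply]
  rw [Finset.sum_comm]

lemma per_index {k : ℕ} {b : ℝ} (hb : 0 < b) (u x : Fin k → ℝ) :
    ((1 / Real.sqrt b) • u - Real.sqrt b • x) ⬝ᵥ ((1 / Real.sqrt b) • u - Real.sqrt b • x)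
      = (1 / b) * (u ⬝ᵥ u) - 2 * (u ⬝ᵥ x) + b * (x ⬝ᵥ x) := by
  have hs : Real.sqrt b ^ 2 = b := Real.sq_sqrt hb.le
  have hs0 : Real.sqrt b ≠ 0 := by positivity
  simp only [dotProduct_sub, sub_dotProduct, smul_dotProduct,
    dotProduct_smul, smul_eq_mul, dotProduct_comm x u]
  field_simp
  ring_nf
  rw [hs]
  rw [show Real.sqrt b ^ 4 = b ^ 2 by rw [show (4:ℕ) = 2 * 2 by norm_num, pow_mul, hs]]
  ring

theorem stmt_15 {p m : ℕ} (hp : 1 ≤ p) (n : Fin p → ℕ)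
    (A : ∀ i : Fin p, Matrix (Fin m) (Fin (n i)) ℝ)
    (β : Fin p → ℝ) (hβ : ∀ i, 0 < β i) (δ : ℝ) (hδ : 0 < δ) :
    (∀ (x : ∀ i : Fin p, Fin (n i) → ℝ) (lam : Fin m → ℝ),
      (∑ i, β i * (x i ⬝ᵥ x i)) - 2 * (lam ⬝ᵥ ∑ i, A i *ᵥ x i) +
          lam ⬝ᵥ (((∑ i, (1 / β i) • (A i * (A i)ᵀ)) + δ • (1 : Matrix (Fin m) (Fin m) ℝ)) *ᵥ lam) =
        (∑ i, ((1 / Real.sqrt (β i)) • ((A i)ᵀ *ᵥ lam) - Real.sqrt (β i) • x i) ⬝ᵥ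
            ((1 / Real.sqrt (β i)) • ((A i)ᵀ *ᵥ lam) - Real.sqrt (β i) • x i)) +
          δ * (lam ⬝ᵥ lam)) ∧
    (∀ (x : ∀ i : Fin p, Fin (n i) → ℝ) (lam : Fin m → ℝ), ¬(x = 0 ∧ lam = 0) →
      0 < (∑ i, β i * (x i ⬝ᵥ x i)) - 2 * (lam ⬝ᵥ ∑ i, A i *ᵥ x i) +
          lam ⬝ᵥ (((∑ i, (1 / β i) • (A i * (A i)ᵀ)) + δ • (1 : Matrix (Fin m) (Fin m) ℝ)) *ᵥ lam)) := by
  have key : ∀ (x : ∀ i : Fin p, Fin (n i) → ℝ) (lam : Fin m → ℝ),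
      (∑ i, β i * (x i ⬝ᵥ x i)) - 2 * (lam ⬝ᵥ ∑ i, A i *ᵥ x i) +
          lam ⬝ᵥ (((∑ i, (1 / β i) • (A i * (A i)ᵀ)) + δ • (1 : Matrix (Fin m) (Fin m) ℝ)) *ᵥ lam) =
        (∑ i, ((1 / Real.sqrt (β i)) • ((A i)ᵀ *ᵥ lam) - Real.sqrt (β i) • x i) ⬝ᵥ
            ((1 / Real.sqrt (β i)) • ((A i)ᵀ *ᵥ lam) - Real.sqrt (β i) • x i)) +
          δ * (lam ⬝ᵥ lam) := by
    intro x lam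
    have hAAT : ∀ i, lam ⬝ᵥ ((A i * (A i)ᵀ) *ᵥ lam) = ((A i)ᵀ *ᵥ lam) ⬝ᵥ ((A i)ᵀ *ᵥ lam) := by
      intro i
      rw [← Matrix.mulVec_mulVec, Matrix.dotProduct_mulVec, ← Matrix.mulVec_transpose]
    have hAx : ∀ i, lam ⬝ᵥ (A i *ᵥ x i) = ((A i)ᵀ *ᵥ lam) ⬝ᵥ x i := by
      intro i
      rw [Matrix.dotProduct_mulVec, ← Matrix.mulVec_transpose]
    calc (∑ i, β i * (x i ⬝ᵥ x i)) - 2 * (lam ⬝ᵥ ∑ i, A i *ᵥ x i) +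
          lam ⬝ᵥ (((∑ i, (1 / β i) • (A i * (A i)ᵀ)) + δ • (1 : Matrix (Fin m) (Fin m) ℝ)) *ᵥ lam)
        = (∑ i, ((1 / β i) * (((A i)ᵀ *ᵥ lam) ⬝ᵥ ((A i)ᵀ *ᵥ lam))
              - 2 * (((A i)ᵀ *ᵥ lam) ⬝ᵥ x i) + β i * (x i ⬝ᵥ x i))) + δ * (lam ⬝ᵥ lam) := by
          simp only [Matrix.add_mulVec, dotProduct_add, my_sum_mulVec,
            Matrix.smul_mulVec, Matrix.one_mulVec, my_dotProduct_sum,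
            dotProduct_smul, smul_eq_mul, hAAT, hAx, Finset.mul_sum,
            Finset.sum_sub_distrib, Finset.sum_add_distrib]
          ring
      _ = _ := by
          congr 1
          exact Finset.sum_congr rfl fun i _ => (per_index (hβ i) _ _).symm
  refine ⟨key, fun x lam h => ?_⟩
  rw [key x lam]
  rcases eq_or_ne lam 0 with hl | hl
  · subst hl
    have hx : x ≠ 0 := fun hx => h ⟨hx, rfl⟩
    obtain ⟨i, hi⟩ := Function.ne_iff.mp hx
    have h2 : 0 < ((1 / Real.sqrt (β i)) • ((A i)ᵀ *ᵥ (0:Fin m → ℝ)) - Real.sqrt (β i) • x i) ⬝ᵥ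
        ((1 / Real.sqrt (β i)) • ((A i)ᵀ *ᵥ (0:Fin m → ℝ)) - Real.sqrt (β i) • x i) := by
      rw [per_index (hβ i)]
      simp only [Matrix.mulVec_zero, dotProduct_zero, zero_dotProduct,
        mul_zero, zero_sub, sub_zero, add_zero, neg_zero, zero_add]
      have : 0 < x i ⬝ᵥ x i := dp_self_pos hi
      have hb := hβ i
      positivity
    have hsum : 0 < ∑ j, ((1 / Real.sqrt (β j)) • ((A j)ᵀ *ᵥ (0:Fin m → ℝ)) - Real.sqrt (β j) • x j) ⬝ᵥ
        ((1 / Real.sqrt (β j)) • ((A j)ᵀ *ᵥ (0:Fin m → ℝ)) - Real.sqrt (β j) • x j) :=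
      Finset.sum_pos' (fun j _ => dp_self_nonneg _) ⟨i, Finset.mem_univ i, h2⟩
    simp only [dotProduct_zero, mul_zero, add_zero] at *
    linarith
  · have h2 : 0 < lam ⬝ᵥ lam := dp_self_pos hl
    have h1 : (0:ℝ) ≤ ∑ i, ((1 / Real.sqrt (β i)) • ((A i)ᵀ *ᵥ lam) - Real.sqrt (β i) • x i) ⬝ᵥ
        ((1 / Real.sqrt (β i)) • ((A i)ᵀ *ᵥ lam) - Real.sqrt (β i) • x i) :=
      Finset.sum_nonneg fun i _ => dp_self_nonneg _
    nlinarith
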